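/- Let N be a positive integer, let A be an N×N complex matrix, and let Θ be an N×N positive-definite Hermitian complex matrix such that Aᴴ Θ = Θ A, where ᴴ denotes conjugate transpose. Then every eigenvalue of A is real, i.e., the spectrum of A (as a subset of ℂ) is contained in the range of the embedding of ℝ into ℂ. -/

import Mathlib

open scoped ComplexOrder
open Matrix

/-- If `A` is quasi-Hermitian with respect to a positive-definite Hermitian
metric `Θ` (i.e. `Aᴴ Θ = Θ A`), then the spectrum of `A` is real. -/
theorem quasiHermitian_spectrum_real (N : ℕ) (hN : 0 < N)
    (A Θ : Matrix (Fin N) (Fin N) ℂ)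
    (hΘherm : Θ.IsHermitian) (hΘpos : Θ.PosDef)
    (h : Aᴴ * Θ = Θ * A) :
    spectrum ℂ A ⊆ Set.range ((↑) : ℝ → ℂ) := by
  intro μ hμ
  rw [spectrum.mem_iff, Matrix.isUnit_iff_isUnit_det, isUnit_iff_ne_zero, not_not] at hμ
  obtain ⟨v, hv, hAv⟩ := (Matrix.exists_mulVec_eq_zero_iff).2 hμ
  have hAv' : A *ᵥ v = μ • v := by
    have := congrArg (fun w => A *ᵥ v + w) hAv
    simpa [Matrix.sub_mulVec, Algebra.algebraMap_eq_smul_one, Matrix.smul_mulVec, Matrix.one_mulVec] using this.symm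
  have hc : (0 : ℂ) < star v ⬝ᵥ Θ *ᵥ v := hΘpos.dotProduct_mulVec_pos hv
  have key : (starRingEnd ℂ) μ * (star v ⬝ᵥ Θ *ᵥ v) = μ * (star v ⬝ᵥ Θ *ᵥ v) := by
    have h1 : star v ⬝ᵥ (Aᴴ * Θ) *ᵥ v = star v ⬝ᵥ (Θ * A) *ᵥ v := by rw [h]
    have h2 : star v ⬝ᵥ (Aᴴ * Θ) *ᵥ v = (starRingEnd ℂ) μ * (star v ⬝ᵥ Θ *ᵥ v) := by
      rw [← Matrix.mulVec_mulVec, Matrix.dotProduct_mulVec, ← Matrix.star_mulVec, hAv',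
        star_smul]
      simp [smul_dotProduct]
    have h3 : star v ⬝ᵥ (Θ * A) *ᵥ v = μ * (star v ⬝ᵥ Θ *ᵥ v) := by
      rw [← Matrix.mulVec_mulVec, hAv', Matrix.mulVec_smul, dotProduct_smul,
        smul_eq_mul]
    rw [← h2, ← h3, h1]
  have : (starRingEnd ℂ) μ = μ := mul_right_cancel₀ (ne_of_gt hc) key
  obtain ⟨r, hr⟩ := Complex.conj_eq_iff_real.mp this
  exact ⟨r, hr.symm⟩
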